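/- For every positive integer n, ∑_{k=0}^{n} ( e_k(z_1,...,z_n)^2 - e_{k-1}(z_1,...,z_n) e_{k+1}(z_1,...,z_n) ) = e_n(z_1,...,z_n) * ∑_{k=0}^{⌊n/2⌋} C_k * e_{n-2k}(z_1 + 1/z_1, ..., z_n + 1/z_n), where C_k = C(2k,k)/(k+1) is the k-th Catalan number, as an identity of rational functions in nonzero variables z_1,...,z_n. -/

import Mathlib

/-- The `k`-th elementary symmetric function of `z 0, …, z (n-1)`; it vanishes for `k > n`
and `esym n z 0 = 1`. -/
noncomputable def esym (n : ℕ) (z : Fin n → ℂ) (k : ℕ) : ℂ :=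
  ∑ s ∈ Finset.powersetCard k (Finset.univ : Finset (Fin n)), ∏ i ∈ s, z i

/-- Elementary symmetric function with integer index: `0` for negative index. -/
noncomputable def esymZ (n : ℕ) (z : Fin n → ℂ) (k : ℤ) : ℂ :=
  if 0 ≤ k then esym n z k.toNat else 0

open Polynomial Finset

lemma esym_zero_of_gt (n : ℕ) (z : Fin n → ℂ) {k : ℕ} (hk : n < k) : esym n z k = 0 := by
  unfold esym
  rw [Finset.powersetCard_eq_empty.2 (by simpa using hk), Finset.sum_empty]

lemma esym_top (n : ℕ) (z : Fin n → ℂ) : esym n z n = ∏ i, z i := by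
  unfold esym
  have h : Finset.powersetCard n (Finset.univ : Finset (Fin n)) = {Finset.univ} := by
    simpa using Finset.powersetCard_self (Finset.univ : Finset (Fin n))
  rw [h, Finset.sum_singleton]

lemma prod_expand (n : ℕ) (y : Fin n → ℂ) (p q : Polynomial ℂ) :
    ∏ i : Fin n, (Polynomial.C (y i) * p + q) =
      ∑ m ∈ Finset.range (n + 1), Polynomial.C (esym n y m) * p ^ m * q ^ (n - m) := by
  rw [Finset.prod_add, Finset.sum_powerset]
  have hcard : (Finset.univ : Finset (Fin n)).card = n := by simp
  rw [hcard]
  refine Finset.sum_congr rfl fun m hm => ?_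
  rw [esym, map_sum, Finset.sum_mul, Finset.sum_mul]
  refine Finset.sum_congr rfl fun t ht => ?_
  have htc : t.card = m := (Finset.mem_powersetCard.mp ht).2
  rw [Finset.prod_mul_distrib, Finset.prod_const, htc,
      Finset.prod_const, Finset.card_sdiff_of_subset (Finset.subset_univ t), hcard, htc, ← map_prod]

lemma factor_eq (z : ℂ) (hz : z ≠ 0) :
    (Polynomial.C z * X + 1) * (Polynomial.C z + X) =
      Polynomial.C z * (Polynomial.C (z + z⁻¹) * X + (X ^ 2 + 1)) := by
  have h' : z * (z + z⁻¹) = z * z + 1 := by field_simp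
  have h2 : (Polynomial.C z : Polynomial ℂ) * Polynomial.C (z + z⁻¹)
      = Polynomial.C z * Polynomial.C z + 1 := by
    rw [← Polynomial.C_mul, h', Polynomial.C_add, Polynomial.C_mul, Polynomial.C_1]
  linear_combination (-(X : Polynomial ℂ)) * h2

lemma coeff_double (n : ℕ) (u v : ℕ → ℂ) (fi fj : ℕ → ℕ) (r : ℕ) :
    ((∑ a ∈ Finset.range (n+1), Polynomial.C (u a) * X ^ fi a) *
     (∑ b ∈ Finset.range (n+1), Polynomial.C (v b) * X ^ fj b)).coeff r =
    ∑ a ∈ Finset.range (n+1), ∑ b ∈ Finset.range (n+1),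
      if fi a + fj b = r then u a * v b else 0 := by
  rw [Finset.sum_mul_sum, Polynomial.finset_sum_coeff]
  refine Finset.sum_congr rfl fun a _ => ?_
  rw [Polynomial.finset_sum_coeff]
  refine Finset.sum_congr rfl fun b _ => ?_
  rw [mul_mul_mul_comm, ← Polynomial.C_mul, ← pow_add, Polynomial.coeff_C_mul,
    Polynomial.coeff_X_pow]
  simp only [mul_ite, mul_one, mul_zero]
  refine if_congr (by omega) rfl rfl

lemma coeff_pow_sq (j t : ℕ) :
    (((X : Polynomial ℂ)^2 + 1)^j).coeff t = if 2 ∣ t then (j.choose (t/2) : ℂ) else 0 := by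
  rw [add_pow, Polynomial.finset_sum_coeff]
  have step : ∀ i ∈ Finset.range (j+1),
      ((((X : Polynomial ℂ) ^ 2) ^ i * 1 ^ (j - i) * (j.choose i : Polynomial ℂ)).coeff t)
        = if t = 2 * i then (j.choose i : ℂ) else 0 := by
    intro i _
    rw [one_pow, mul_one, ← pow_mul, ← Polynomial.C_eq_natCast, Polynomial.coeff_mul_C,
      Polynomial.coeff_X_pow]
    simp only [ite_mul, one_mul, zero_mul]
  rw [Finset.sum_congr rfl step]
  by_cases h : 2 ∣ t
  · obtain ⟨k, rfl⟩ := h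
    have hk2 : 2 * k / 2 = k := by omega
    by_cases hk : k ≤ j
    · rw [Finset.sum_eq_single k (fun i _ hne => by rw [if_neg (by omega)])
        (fun hmem => absurd (Finset.mem_range.2 (by omega)) hmem)]
      simp [hk2]
    · rw [Finset.sum_eq_zero (fun i hi => by
        rw [if_neg (by simp at hi; omega)])]
      rw [if_pos ⟨k, rfl⟩, hk2, Nat.choose_eq_zero_of_lt (by omega), Nat.cast_zero]
  · rw [if_neg h, Finset.sum_eq_zero]
    intro i _
    rw [if_neg (by omega)]

/-- `∑_{k=0}^n (e_k² - e_{k-1} e_{k+1}) = e_n · ∑_{k=0}^{⌊n/2⌋} C_k e_{n-2k}(z_i + 1/z_i)`,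
where `C_k = C(2k,k)/(k+1)` is the `k`-th Catalan number. -/
theorem esym_catalan_identity (n : ℕ) (hn : 0 < n) (z : Fin n → ℂ) (hz : ∀ i, z i ≠ 0) :
    ∑ k ∈ Finset.range (n + 1),
        ((esym n z k) ^ 2 - esymZ n z ((k : ℤ) - 1) * esym n z (k + 1)) =
      esym n z n *
        ∑ k ∈ Finset.range (n / 2 + 1),
          ((((2 * k).choose k : ℚ) / ((k : ℚ) + 1) : ℚ) : ℂ) *
            esym n (fun i => z i + (z i)⁻¹) (n - 2 * k) := by
  set e : ℕ → ℂ := esym n z with he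
  set w : ℕ → ℂ := esym n (fun i => z i + (z i)⁻¹) with hw
  -- the key polynomial identity
  have key : (∑ a ∈ Finset.range (n+1), Polynomial.C (e a) * X ^ a) *
      (∑ b ∈ Finset.range (n+1), Polynomial.C (e b) * X ^ (n - b)) =
      Polynomial.C (e n) *
        ∑ m ∈ Finset.range (n+1), Polynomial.C (w m) * X ^ m * (X^2+1) ^ (n - m) := by
    have h1 := prod_expand n z X 1
    have h2 := prod_expand n z 1 X
    have h3 := prod_expand n (fun i => z i + (z i)⁻¹) X (X^2+1)
    simp only [one_pow, mul_one] at h1 h2 h3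
    rw [← h1, ← h2, ← h3, he, esym_top, map_prod, ← Finset.prod_mul_distrib,
      ← Finset.prod_mul_distrib]
    exact Finset.prod_congr rfl fun i _ => factor_eq (z i) (hz i)
  -- coefficient of Xⁿ on the left of `key`
  have hA0 : ((∑ a ∈ Finset.range (n+1), Polynomial.C (e a) * X ^ a) *
      (∑ b ∈ Finset.range (n+1), Polynomial.C (e b) * X ^ (n - b))).coeff n
      = ∑ a ∈ Finset.range (n+1), e a ^ 2 := by
    rw [coeff_double n e e (fun a => a) (fun b => n - b) n]
    refine Finset.sum_congr rfl fun a ha => ?_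
    have ha' : a ≤ n := Finset.mem_range_succ_iff.mp ha
    have hinner : (∑ b ∈ Finset.range (n+1), if a + (n - b) = n then e a * e b else 0)
        = e a * e a := by
      rw [Finset.sum_eq_single a]
      · rw [if_pos (by omega)]
      · intro b hb hne
        have hb' : b ≤ n := Finset.mem_range_succ_iff.mp hb
        rw [if_neg (by omega)]
      · intro h
        exact absurd ha h
    rw [hinner, sq]
  -- coefficient of Xⁿ of X² times the left of `key`
  have hA2 : ((X:Polynomial ℂ)^2 * ((∑ a ∈ Finset.range (n+1), Polynomial.C (e a) * X ^ a) *
      (∑ b ∈ Finset.range (n+1), Polynomial.C (e b) * X ^ (n - b)))).coeff n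
      = ∑ a ∈ Finset.range (n+1), e a * e (a + 2) := by
    have hxa : (X:Polynomial ℂ)^2 * (∑ a ∈ Finset.range (n+1), Polynomial.C (e a) * X ^ a)
        = ∑ a ∈ Finset.range (n+1), Polynomial.C (e a) * X ^ (a + 2) := by
      rw [Finset.mul_sum]
      exact Finset.sum_congr rfl fun a _ => by ring
    rw [← mul_assoc, hxa, coeff_double n e e (fun a => a + 2) (fun b => n - b) n]
    refine Finset.sum_congr rfl fun a ha => ?_
    have ha' : a ≤ n := Finset.mem_range_succ_iff.mp ha
    have hinner : (∑ b ∈ Finset.range (n+1), if a + 2 + (n - b) = n then e a * e b else 0)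
        = e a * e (a + 2) := by
      rw [Finset.sum_eq_single (a + 2)]
      · by_cases hc : a + 2 + (n - (a + 2)) = n
        · rw [if_pos hc]
        · rw [if_neg hc, he, esym_zero_of_gt n z (k := a + 2) (by omega), mul_zero]
      · intro b hb hne
        have hb' : b ≤ n := Finset.mem_range_succ_iff.mp hb
        rw [if_neg (by omega)]
      · intro h
        have h' : n < a + 2 := by
          simp only [Finset.mem_range] at h
          omega
        rw [if_neg (by omega)]
    rw [hinner]
  -- coefficient of Xⁿ on the right of `key`
  have hB0 : (Polynomial.C (e n) *
      ∑ m ∈ Finset.range (n+1), Polynomial.C (w m) * X ^ m * (X^2+1) ^ (n - m)).coeff n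
      = e n * ∑ m ∈ Finset.range (n+1), w m *
          (if 2 ∣ (n - m) then (((n-m).choose ((n-m)/2)) : ℂ) else 0) := by
    rw [Polynomial.coeff_C_mul, Polynomial.finset_sum_coeff]
    congr 1
    refine Finset.sum_congr rfl fun m hm => ?_
    have hm' : m ≤ n := Finset.mem_range_succ_iff.mp hm
    rw [mul_assoc, Polynomial.coeff_C_mul, mul_comm ((X:Polynomial ℂ) ^ m),
      Polynomial.coeff_mul_X_pow', if_pos hm', coeff_pow_sq]
  -- coefficient of Xⁿ of X² times the right of `key`
  have hB2 : ((X:Polynomial ℂ)^2 * (Polynomial.C (e n) *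
      ∑ m ∈ Finset.range (n+1), Polynomial.C (w m) * X ^ m * (X^2+1) ^ (n - m))).coeff n
      = e n * ∑ m ∈ Finset.range (n+1), w m *
          (if m + 2 ≤ n then
            (if 2 ∣ (n - (m+2)) then (((n-m).choose ((n-(m+2))/2)) : ℂ) else 0) else 0) := by
    have hre : (X:Polynomial ℂ)^2 * (Polynomial.C (e n) *
        ∑ m ∈ Finset.range (n+1), Polynomial.C (w m) * X ^ m * (X^2+1) ^ (n - m))
        = Polynomial.C (e n) *
          ∑ m ∈ Finset.range (n+1), Polynomial.C (w m) * X ^ (m+2) * (X^2+1) ^ (n - m) := by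
      rw [mul_left_comm, Finset.mul_sum]
      refine congrArg _ ?_
      exact Finset.sum_congr rfl fun m _ => by ring
    rw [hre, Polynomial.coeff_C_mul, Polynomial.finset_sum_coeff]
    refine congrArg _ ?_
    refine Finset.sum_congr rfl fun m hm => ?_
    rw [mul_assoc, Polynomial.coeff_C_mul, mul_comm ((X:Polynomial ℂ) ^ (m+2)),
      Polynomial.coeff_mul_X_pow', coeff_pow_sq]
  -- rewrite the left-hand side of the goal
  have hZ : ∑ k ∈ Finset.range (n + 1), esymZ n z ((k : ℤ) - 1) * e (k + 1)
      = ∑ a ∈ Finset.range (n+1), e a * e (a + 2) := by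
    have hterm : ∀ i : ℕ, esymZ n z ((↑(i+1) : ℤ) - 1) * e (i + 1 + 1) = e i * e (i + 2) := by
      intro i
      have h1 : ((↑(i+1) : ℤ) - 1) = (i : ℤ) := by push_cast; ring
      have h2 : esymZ n z (i : ℤ) = e i := by simp [esymZ, he]
      rw [h1, h2]
    rw [Finset.sum_range_succ' (fun k => esymZ n z ((k : ℤ) - 1) * e (k + 1)) n,
      Finset.sum_range_succ (fun a => e a * e (a + 2)) n]
    have h0 : esymZ n z ((↑(0:ℕ) : ℤ) - 1) * e (0 + 1) = 0 := by
      norm_num [esymZ]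
    have hlast : e n * e (n + 2) = 0 := by
      rw [he, esym_zero_of_gt n z (k := n+2) (by omega), mul_zero]
    rw [h0, hlast, add_zero, add_zero]
    exact Finset.sum_congr rfl fun i _ => hterm i
  -- the combinatorial reindexing on the right
  have hstep : ∑ m ∈ Finset.range (n+1), w m *
        ((if 2 ∣ (n - m) then (((n-m).choose ((n-m)/2)) : ℂ) else 0) -
         (if m + 2 ≤ n then
            (if 2 ∣ (n - (m+2)) then (((n-m).choose ((n-(m+2))/2)) : ℂ) else 0) else 0))
      = ∑ k ∈ Finset.range (n / 2 + 1),
          ((((2 * k).choose k : ℚ) / ((k : ℚ) + 1) : ℚ) : ℂ) * w (n - 2 * k) := by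
    set F : ℕ → ℂ := fun m => w m *
        ((if 2 ∣ (n - m) then (((n-m).choose ((n-m)/2)) : ℂ) else 0) -
         (if m + 2 ≤ n then
            (if 2 ∣ (n - (m+2)) then (((n-m).choose ((n-(m+2))/2)) : ℂ) else 0) else 0)) with hF
    have hinj : ∀ a ∈ Finset.range (n/2+1), ∀ b ∈ Finset.range (n/2+1),
        n - 2*a = n - 2*b → a = b := by
      intro a ha b hb hab
      simp only [Finset.mem_range] at ha hb
      omega
    have himg : ∑ m ∈ (Finset.range (n/2+1)).image (fun k => n - 2*k), F m
        = ∑ k ∈ Finset.range (n/2+1), F (n - 2*k) :=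
      Finset.sum_image hinj
    have hsub : ∑ m ∈ Finset.range (n+1), F m
        = ∑ m ∈ (Finset.range (n/2+1)).image (fun k => n - 2*k), F m := by
      refine (Finset.sum_subset ?_ ?_).symm
      · intro m hm
        simp only [Finset.mem_image, Finset.mem_range] at hm ⊢
        obtain ⟨k, hk, rfl⟩ := hm
        omega
      · intro m hm hnot
        have hnot' : ∀ k, k < n/2 + 1 → n - 2*k ≠ m := by
          intro k hk1 hk2
          exact hnot (Finset.mem_image.mpr ⟨k, Finset.mem_range.mpr hk1, hk2⟩)
        have hm' : m ≤ n := Finset.mem_range_succ_iff.mp hm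
        have hodd : ¬ 2 ∣ (n - m) := by
          rintro ⟨k, hk⟩
          exact hnot' k (by omega) (by omega)
        rw [hF]
        simp only
        rw [if_neg hodd]
        by_cases hm2 : m + 2 ≤ n
        · rw [if_pos hm2, if_neg (by omega)]
          ring
        · rw [if_neg hm2]
          ring
    rw [hsub, himg]
    refine Finset.sum_congr rfl fun k hk => ?_
    have hk' : k ≤ n / 2 := Finset.mem_range_succ_iff.mp hk
    have h2k : 2 * k ≤ n := by omega
    have h1 : n - (n - 2*k) = 2*k := by omega
    rw [hF]
    simp only
    rw [h1, if_pos ⟨k, rfl⟩]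
    have h2 : 2 * k / 2 = k := by omega
    rw [h2]
    rcases Nat.eq_zero_or_pos k with rfl | hkpos
    · rw [if_neg (by omega)]
      norm_num
    · have hcond : n - 2*k + 2 ≤ n := by omega
      rw [if_pos hcond, if_pos ⟨k - 1, by omega⟩]
      have h3 : (n - (n - 2*k + 2)) / 2 = k - 1 := by omega
      rw [h3]
      -- now the Catalan computation
      obtain ⟨j, rfl⟩ : ∃ j, k = j + 1 := ⟨k - 1, by omega⟩
      have hnat : (2*(j+1)).choose (j+1) * (j+1) = (2*(j+1)).choose j * (j+2) := by
        have h := Nat.choose_succ_right_eq (2*(j+1)) j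
        have h9 : 2*(j+1) - j = j + 2 := by omega
        rw [h9] at h
        exact h
      have hq : ((2*(j+1)).choose (j+1) : ℂ) * ((j:ℂ)+1)
          = ((2*(j+1)).choose j : ℂ) * ((j:ℂ)+2) := by
        have h8 := congrArg (fun x : ℕ => (x : ℂ)) hnat
        push_cast at h8
        linear_combination h8
      have hj1 : j + 1 - 1 = j := by omega
      rw [hj1]
      have hne : ((j:ℂ) + 1 + 1) ≠ 0 := by
        have h9 : ((j:ℂ) + 1 + 1) = ((j + 2 : ℕ) : ℂ) := by push_cast; ring
        rw [h9, Ne, Nat.cast_eq_zero]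
        omega
      push_cast
      field_simp
      linear_combination (w (n - 2*(j+1))) * hq
  -- put everything together
  have hgoal : ∑ k ∈ Finset.range (n + 1),
      ((e k) ^ 2 - esymZ n z ((k : ℤ) - 1) * e (k + 1))
      = ∑ a ∈ Finset.range (n+1), e a ^ 2 - ∑ a ∈ Finset.range (n+1), e a * e (a + 2) := by
    rw [Finset.sum_sub_distrib, hZ]
  rw [hgoal, ← hA0, ← hA2, key, hB0, hB2, ← mul_sub, ← Finset.sum_sub_distrib]
  simp_rw [← mul_sub]
  rw [hstep]
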